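/- Let A = {f ∈ C(𝕋, M_n(ℂ)) : f(x_i) ∈ M_{d_i}, i = 1,…,N} be a building block and set d = gcd(d₁,…,d_N). Then A contains a projection of rank r (with 0 ≤ r ≤ n) if and only if n/d divides r. In particular, A contains no projections other than 0 and 1 if and only if d = 1. -/

import Mathlib

/-- `M` lies in the unital copy of `M_d` inside `M_n`, embedded via
`a ↦ diag(a, a, …, a)` (`n/d` copies). -/
def IsBlockDiagRep (n d : ℕ) (M : Matrix (Fin n) (Fin n) ℂ) : Prop :=
  (∀ p q : Fin n, (p : ℕ) / d ≠ (q : ℕ) / d → M p q = 0) ∧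
  (∀ p q p' q' : Fin n, (p : ℕ) / d = (q : ℕ) / d → (p' : ℕ) / d = (q' : ℕ) / d →
    (p : ℕ) % d = (p' : ℕ) % d → (q : ℕ) % d = (q' : ℕ) % d → M p q = M p' q')

open Matrix

/-- The trace of an idempotent complex matrix equals its rank. -/
lemma trace_eq_rank_idem {m : ℕ} (M : Matrix (Fin m) (Fin m) ℂ) (h : M * M = M) :
    M.trace = (M.rank : ℂ) := by
  have hf : M.mulVecLin ∘ₗ M.mulVecLin = M.mulVecLin := by
    rw [← Matrix.mulVecLin_mul, h]
  obtain ⟨p, hp⟩ := (LinearMap.isProj_iff_isIdempotentElem M.mulVecLin).mpr hf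
  have hrange : LinearMap.range M.mulVecLin = p := by
    apply le_antisymm
    · rintro y ⟨v, rfl⟩; exact hp.map_mem v
    · intro y hy; exact ⟨y, hp.map_id y hy⟩
  have ht := hp.trace
  rw [LinearMap.trace_eq_matrix_trace ℂ (Pi.basisFun ℂ (Fin m)),
    LinearMap.toMatrix_eq_toMatrix', ← Matrix.toLin'_apply', LinearMap.toMatrix'_toLin'] at ht
  have hr : M.rank = Module.finrank ℂ p := by rw [Matrix.rank, hrange]
  rw [ht, hr]

/-- A rank-zero complex matrix is zero. -/
lemma eq_zero_of_rank_zero {m : ℕ} {M : Matrix (Fin m) (Fin m) ℂ} (h : M.rank = 0) : M = 0 := by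
  rw [Matrix.rank] at h
  have h1 : LinearMap.range M.mulVecLin = ⊥ := Submodule.finrank_eq_zero.mp h
  have h2 : M.mulVecLin = 0 := LinearMap.range_eq_bot.mp h1
  ext i j
  have h3 : M *ᵥ Pi.single j 1 = 0 := by
    have := DFunLike.congr_fun h2 (Pi.single j 1)
    simpa [Matrix.mulVecLin_apply] using this
  have h4 := congrFun h3 i
  simpa [Matrix.mulVec_single] using h4

/-- An idempotent complex matrix of full rank is the identity. -/
lemma eq_one_of_idem_rank_card {m : ℕ} {M : Matrix (Fin m) (Fin m) ℂ} (hidem : M * M = M)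
    (h : M.rank = m) : M = 1 := by
  have h1 : LinearMap.range M.mulVecLin = ⊤ := by
    apply Submodule.eq_top_of_finrank_eq
    rw [← Matrix.rank, h, Module.finrank_fintype_fun_eq_card, Fintype.card_fin]
  have hsurj : Function.Surjective M.mulVecLin := LinearMap.range_eq_top.mp h1
  have hfix : ∀ v, M *ᵥ v = v := by
    intro v
    obtain ⟨u, hu⟩ := hsurj v
    rw [Matrix.mulVecLin_apply] at hu
    have : M *ᵥ (M *ᵥ u) = M *ᵥ u := by rw [Matrix.mulVec_mulVec, hidem]
    rw [← hu]
    exact this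
  ext i j
  have h4 := congrFun (hfix (Pi.single j 1)) i
  rw [Matrix.mulVec_single] at h4
  simp only [Pi.smul_apply, Matrix.col_apply, op_smul_eq_mul, mul_one] at h4
  rw [h4, Matrix.one_apply, Pi.single_apply]

/-- The block-index equivalence `Fin (n/d) × Fin d ≃ Fin n`, `(a, b) ↦ d*a + b`. -/
def prodEquiv (n dd : ℕ) (hd : 0 < dd) (hdn : dd ∣ n) : Fin (n / dd) × Fin dd ≃ Fin n where
  toFun x := ⟨dd * x.1 + x.2, by
    have h2 : (x.2 : ℕ) < dd := x.2.2
    have h3 : dd * ((x.1 : ℕ) + 1) ≤ dd * (n / dd) := Nat.mul_le_mul_left dd x.1.2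
    have h4 : dd * (n / dd) = n := Nat.mul_div_cancel' hdn
    have h5 : dd * ((x.1 : ℕ) + 1) = dd * (x.1 : ℕ) + dd := by ring
    omega⟩
  invFun i := (⟨(i : ℕ) / dd, Nat.div_lt_div_of_lt_of_dvd hdn i.2⟩,
    ⟨(i : ℕ) % dd, Nat.mod_lt _ hd⟩)
  left_inv x := by
    ext
    · show (dd * (x.1 : ℕ) + (x.2 : ℕ)) / dd = x.1
      rw [Nat.mul_add_div hd, Nat.div_eq_of_lt x.2.2, add_zero]
    · show (dd * (x.1 : ℕ) + (x.2 : ℕ)) % dd = x.2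
      rw [Nat.mul_add_mod, Nat.mod_eq_of_lt x.2.2]
  right_inv i := by
    apply Fin.ext
    exact Nat.div_add_mod _ _

lemma prodEquiv_val (n dd : ℕ) (hd : 0 < dd) (hdn : dd ∣ n) (x : Fin (n / dd) × Fin dd) :
    ((prodEquiv n dd hd hdn x : Fin n) : ℕ) = dd * (x.1 : ℕ) + (x.2 : ℕ) := rfl

/-- If `M` is an idempotent matrix lying in the embedded copy of `M_d`, then `n/d` divides
its rank. -/
lemma rank_dvd_of_blockrep {n dd : ℕ} (hn : 0 < n) (hd : 0 < dd) (hdn : dd ∣ n)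
    {M : Matrix (Fin n) (Fin n) ℂ} (hM : IsBlockDiagRep n dd M) (hidem : M * M = M) :
    (n / dd) ∣ M.rank := by
  have hle : dd ≤ n := Nat.le_of_dvd hn hdn
  have hnd : 0 < n / dd := Nat.div_pos hle hd
  set e := prodEquiv n dd hd hdn with he
  set a : Matrix (Fin dd) (Fin dd) ℂ := M.submatrix (Fin.castLE hle) (Fin.castLE hle) with ha
  have hcast : ∀ j : Fin dd, ((Fin.castLE hle j : Fin n) : ℕ) = (j : ℕ) := fun _ => rfl
  -- mod/div facts
  have hmod : ∀ (u : Fin (n / dd)) (b : Fin dd), ((e (u, b) : Fin n) : ℕ) % dd = (b : ℕ) := by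
    intro u b
    rw [prodEquiv_val, Nat.mul_add_mod, Nat.mod_eq_of_lt b.2]
  have hdiv : ∀ (u : Fin (n / dd)) (b : Fin dd), ((e (u, b) : Fin n) : ℕ) / dd = (u : ℕ) := by
    intro u b
    rw [prodEquiv_val, Nat.mul_add_div hd, Nat.div_eq_of_lt b.2, add_zero]
  -- the corner matrix is idempotent
  have haidem : a * a = a := by
    ext j l
    have hsum : (M * M) (Fin.castLE hle j) (Fin.castLE hle l)
        = ∑ b : Fin dd, M (Fin.castLE hle j) (Fin.castLE hle b)
            * M (Fin.castLE hle b) (Fin.castLE hle l) := by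
      rw [Matrix.mul_apply,
        ← Equiv.sum_comp e (fun q => M (Fin.castLE hle j) q * M q (Fin.castLE hle l)),
        Fintype.sum_prod_type]
      rw [Fintype.sum_eq_single (⟨0, hnd⟩ : Fin (n / dd))]
      · apply Finset.sum_congr rfl
        intro b _
        have hb : e (⟨0, hnd⟩, b) = Fin.castLE hle b := by
          apply Fin.ext
          rw [prodEquiv_val]
          simp
        rw [hb]
      · intro u hu
        apply Finset.sum_eq_zero
        intro b _
        have hzero : M (Fin.castLE hle j) (e (u, b)) = 0 := by
          apply hM.1
          rw [hcast, hdiv, Nat.div_eq_of_lt j.2]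
          intro h0
          apply hu
          apply Fin.ext
          exact h0.symm
        rw [hzero, zero_mul]
    calc (a * a) j l
        = ∑ b : Fin dd, M (Fin.castLE hle j) (Fin.castLE hle b)
            * M (Fin.castLE hle b) (Fin.castLE hle l) := by
          rw [Matrix.mul_apply]; rfl
      _ = (M * M) (Fin.castLE hle j) (Fin.castLE hle l) := hsum.symm
      _ = M (Fin.castLE hle j) (Fin.castLE hle l) := by rw [hidem]
      _ = a j l := rfl
  -- trace identity
  have htr : M.trace = ((n / dd : ℕ) : ℂ) * a.trace := by
    have key : ∀ (u : Fin (n / dd)) (b : Fin dd), M (e (u, b)) (e (u, b)) = a b b := by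
      intro u b
      have h1 : ((e (u, b) : Fin n) : ℕ) % dd = ((Fin.castLE hle b : Fin n) : ℕ) % dd := by
        rw [hmod, hcast, Nat.mod_eq_of_lt b.2]
      exact hM.2 _ _ _ _ rfl rfl h1 h1
    have : M.trace = ∑ x : Fin (n / dd) × Fin dd, M (e x) (e x) := by
      rw [Matrix.trace, ← Equiv.sum_comp e (fun i => M.diag i)]
      rfl
    rw [this, Fintype.sum_prod_type]
    have h2 : ∀ u : Fin (n / dd), ∑ b : Fin dd, M (e (u, b)) (e (u, b)) = a.trace := by
      intro u
      rw [Matrix.trace]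
      exact Finset.sum_congr rfl fun b _ => key u b
    rw [Finset.sum_congr rfl fun u _ => h2 u, Finset.sum_const, Finset.card_univ,
      Fintype.card_fin, nsmul_eq_mul]
  -- conclude divisibility via traces
  have h1 : (M.rank : ℂ) = ((n / dd : ℕ) : ℂ) * (a.rank : ℂ) := by
    rw [← trace_eq_rank_idem M hidem, ← trace_eq_rank_idem a haidem, htr]
  have h2 : M.rank = (n / dd) * a.rank := by exact_mod_cast h1
  exact ⟨a.rank, h2⟩

/-- The standard diagonal projection: `1` in positions `i` with `i % D < s`. -/
def diagProj (n D s : ℕ) : Matrix (Fin n) (Fin n) ℂ :=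
  Matrix.diagonal (fun i : Fin n => if (i : ℕ) % D < s then 1 else 0)

lemma diagProj_idem (n D s : ℕ) : diagProj n D s * diagProj n D s = diagProj n D s := by
  rw [diagProj, Matrix.diagonal_mul_diagonal]
  have hfun : (fun i : Fin n => (if (i : ℕ) % D < s then (1 : ℂ) else 0) *
      (if (i : ℕ) % D < s then (1 : ℂ) else 0)) = fun i : Fin n =>
      if (i : ℕ) % D < s then (1 : ℂ) else 0 := by
    funext i
    by_cases h : (i : ℕ) % D < s
    · simp [h]
    · simp [h]
  rw [hfun]

lemma diagProj_star (n D s : ℕ) : star (diagProj n D s) = diagProj n D s := by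
  show (diagProj n D s)ᴴ = diagProj n D s
  rw [diagProj, Matrix.diagonal_conjTranspose]
  have hfun : (star fun i : Fin n => (if (i : ℕ) % D < s then (1 : ℂ) else 0)) = fun i : Fin n =>
      if (i : ℕ) % D < s then (1 : ℂ) else 0 := by
    funext i
    by_cases h : (i : ℕ) % D < s
    · simp [h]
    · simp [h]
  rw [hfun]

lemma diagProj_blockrep (n D s dd : ℕ) (hDd : D ∣ dd) : IsBlockDiagRep n dd (diagProj n D s) := by
  constructor
  · intro p q h
    exact Matrix.diagonal_apply_ne _ (fun hpq => h (by rw [hpq]))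
  · intro p q p' q' h1 h2 h3 h4
    by_cases hpq : (p : ℕ) = (q : ℕ)
    · have hmods : (p' : ℕ) % dd = (q' : ℕ) % dd := by
        rw [← h3, ← h4, hpq]
      have hp'q' : (p' : ℕ) = (q' : ℕ) := by
        calc (p' : ℕ) = dd * ((p' : ℕ) / dd) + (p' : ℕ) % dd := (Nat.div_add_mod _ _).symm
          _ = dd * ((q' : ℕ) / dd) + (q' : ℕ) % dd := by rw [h2, hmods]
          _ = (q' : ℕ) := Nat.div_add_mod _ _
      obtain rfl : p = q := Fin.ext hpq
      obtain rfl : p' = q' := Fin.ext hp'q'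
      rw [diagProj, Matrix.diagonal_apply_eq, Matrix.diagonal_apply_eq]
      have hmodD : (p : ℕ) % D = (p' : ℕ) % D := by
        rw [← Nat.mod_mod_of_dvd _ hDd, ← Nat.mod_mod_of_dvd (p' : ℕ) hDd, h3]
      rw [hmodD]
    · have hmodne : (p : ℕ) % dd ≠ (q : ℕ) % dd := by
        intro hm
        apply hpq
        calc (p : ℕ) = dd * ((p : ℕ) / dd) + (p : ℕ) % dd := (Nat.div_add_mod _ _).symm
          _ = dd * ((q : ℕ) / dd) + (q : ℕ) % dd := by rw [h1, hm]
          _ = (q : ℕ) := Nat.div_add_mod _ _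
      have hmodne' : (p' : ℕ) % dd ≠ (q' : ℕ) % dd := by rw [← h3, ← h4]; exact hmodne
      have hne : p ≠ q := fun h => hmodne (by rw [h])
      have hne' : p' ≠ q' := fun h => hmodne' (by rw [h])
      rw [diagProj, Matrix.diagonal_apply_ne _ hne, Matrix.diagonal_apply_ne _ hne']

lemma diagProj_rank (n D s : ℕ) (hD : 0 < D) (hDn : D ∣ n) (hs : s ≤ D) :
    (diagProj n D s).rank = (n / D) * s := by
  classical
  rw [diagProj, Matrix.rank_diagonal]
  have hiff : ∀ i : Fin n, ((if (i : ℕ) % D < s then (1 : ℂ) else 0) ≠ 0) ↔ (i : ℕ) % D < s := by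
    intro i
    by_cases h : (i : ℕ) % D < s <;> simp [h]
  rw [Fintype.card_congr (Equiv.subtypeEquivRight hiff)]
  have eqv : {i : Fin n // (i : ℕ) % D < s} ≃ Fin (n / D) × Fin s :=
    { toFun := fun i => (⟨(i : ℕ) / D, Nat.div_lt_div_of_lt_of_dvd hDn i.1.2⟩,
        ⟨(i : ℕ) % D, i.2⟩)
      invFun := fun x => ⟨⟨D * x.1 + x.2, by
        have h2 : (x.2 : ℕ) < D := lt_of_lt_of_le x.2.2 hs
        have h3 : D * ((x.1 : ℕ) + 1) ≤ D * (n / D) := Nat.mul_le_mul_left D x.1.2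
        have h4 : D * (n / D) = n := Nat.mul_div_cancel' hDn
        have h5 : D * ((x.1 : ℕ) + 1) = D * (x.1 : ℕ) + D := by ring
        omega⟩, by
        show (D * (x.1 : ℕ) + (x.2 : ℕ)) % D < s
        rw [Nat.mul_add_mod, Nat.mod_eq_of_lt (lt_of_lt_of_le x.2.2 hs)]
        exact x.2.2⟩
      left_inv := fun i => by
        apply Subtype.ext
        apply Fin.ext
        exact Nat.div_add_mod _ _
      right_inv := fun x => by
        ext
        · show (D * (x.1 : ℕ) + (x.2 : ℕ)) / D = x.1
          rw [Nat.mul_add_div hD, Nat.div_eq_of_lt (lt_of_lt_of_le x.2.2 hs), add_zero]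
        · show (D * (x.1 : ℕ) + (x.2 : ℕ)) % D = x.2
          rw [Nat.mul_add_mod, Nat.mod_eq_of_lt (lt_of_lt_of_le x.2.2 hs)] }
  rw [Fintype.card_congr eqv, Fintype.card_prod, Fintype.card_fin, Fintype.card_fin]

/-- with `D = gcd(d₁,…,d_N)`, the building block
`A = {f ∈ C(𝕋, M_n) : f(xᵢ) ∈ M_{dᵢ}}` contains a projection of rank `r ≤ n`
iff `n/D ∣ r`; in particular it contains no projections besides `0` and `1`
iff `D = 1`. -/
theorem stmt_10 (n N : ℕ) (hn : 0 < n) (hN : 0 < N)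
    (d : Fin N → ℕ) (hd : ∀ i, 0 < d i) (hdvd : ∀ i, d i ∣ n)
    (x : Fin N → Circle) (hx : Function.Injective x) :
    (∀ r : ℕ, r ≤ n →
      ((∃ p : C(Circle, Matrix (Fin n) (Fin n) ℂ),
          (∀ i, IsBlockDiagRep n (d i) (p (x i))) ∧
          (∀ z, p z * p z = p z ∧ star (p z) = p z) ∧
          (∀ z, (p z).rank = r)) ↔
        (n / Finset.univ.gcd d) ∣ r)) ∧
    ((∀ p : C(Circle, Matrix (Fin n) (Fin n) ℂ),
        (∀ i, IsBlockDiagRep n (d i) (p (x i))) →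
        (∀ z, p z * p z = p z ∧ star (p z) = p z) →
        p = 0 ∨ p = 1) ↔ Finset.univ.gcd d = 1) := by
  classical
  set D := Finset.univ.gcd d with hDdef
  have hDd : ∀ i, D ∣ d i := fun i => Finset.gcd_dvd (Finset.mem_univ i)
  have hDn : D ∣ n := (hDd ⟨0, hN⟩).trans (hdvd ⟨0, hN⟩)
  have hD0 : 0 < D := by
    rcases Nat.eq_zero_or_pos D with h | h
    · exfalso
      have := Finset.gcd_eq_zero_iff.mp h ⟨0, hN⟩ (Finset.mem_univ _)
      exact (hd ⟨0, hN⟩).ne' this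
    · exact h
  -- the main divisibility consequence
  have fwd : ∀ (p : C(Circle, Matrix (Fin n) (Fin n) ℂ)),
      (∀ i, IsBlockDiagRep n (d i) (p (x i))) →
      (∀ z, p z * p z = p z) →
      ∀ (r : ℕ), (∀ i, (p (x i)).rank = r) → (n / D) ∣ r := by
    intro p hb hidem r hr
    have h1 : ∀ i, n ∣ r * d i := by
      intro i
      have h2 : (n / d i) ∣ r :=
        hr i ▸ rank_dvd_of_blockrep hn (hd i) (hdvd i) (hb i) (hidem _)
      obtain ⟨k, hk⟩ := h2
      refine ⟨k, ?_⟩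
      calc r * d i = (n / d i) * k * d i := by rw [hk]
        _ = (n / d i * d i) * k := by ring
        _ = n * k := by rw [Nat.div_mul_cancel (hdvd i)]
    have h3 : n ∣ r * D := by
      have hgcd : (Finset.univ.gcd fun i => r * d i) = r * D := by
        rw [hDdef, Finset.gcd_mul_left]
        simp
      rw [← hgcd]
      exact Finset.dvd_gcd fun i _ => h1 i
    have h4 : (n / D) * D ∣ r * D := by rw [Nat.div_mul_cancel hDn]; exact h3
    exact (Nat.mul_dvd_mul_iff_right hD0).mp h4
  constructor
  · intro r hr
    constructor
    · rintro ⟨p, hb, hproj, hrank⟩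
      exact fwd p hb (fun z => (hproj z).1) r (fun i => hrank _)
    · rintro ⟨s, hs⟩
      have hnD : 0 < n / D := Nat.div_pos (Nat.le_of_dvd hn hDn) hD0
      have hsD : s ≤ D := by
        have h5 : (n / D) * s ≤ (n / D) * D := by
          rw [Nat.div_mul_cancel hDn, ← hs]
          exact hr
        exact Nat.le_of_mul_le_mul_left h5 hnD
      refine ⟨ContinuousMap.const _ (diagProj n D s), ?_, ?_, ?_⟩
      · intro i
        exact diagProj_blockrep n D s (d i) (hDd i)
      · intro z
        exact ⟨diagProj_idem n D s, diagProj_star n D s⟩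
      · intro z
        show (diagProj n D s).rank = r
        rw [diagProj_rank n D s hD0 hDn hsD, hs]
  · constructor
    · intro h
      by_contra hD1
      have hD2 : 2 ≤ D := by omega
      have hn2 : 2 ≤ n := le_trans hD2 (Nat.le_of_dvd hn hDn)
      have hq := h (ContinuousMap.const _ (diagProj n D 1))
        (fun i => diagProj_blockrep n D 1 (d i) (hDd i))
        (fun z => ⟨diagProj_idem n D 1, diagProj_star n D 1⟩)
      rcases hq with h0 | h1
      · have hz := ContinuousMap.congr_fun h0 (1 : Circle)
        have he := congrFun (congrFun hz (⟨0, hn⟩ : Fin n)) (⟨0, hn⟩ : Fin n)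
        rw [show (ContinuousMap.const Circle (diagProj n D 1)) (1 : Circle) = diagProj n D 1
            from rfl] at he
        rw [diagProj, Matrix.diagonal_apply_eq] at he
        simp at he
      · have hz := ContinuousMap.congr_fun h1 (1 : Circle)
        have he := congrFun (congrFun hz (⟨1, hn2⟩ : Fin n)) (⟨1, hn2⟩ : Fin n)
        rw [show (ContinuousMap.const Circle (diagProj n D 1)) (1 : Circle) = diagProj n D 1
            from rfl] at he
        rw [diagProj, Matrix.diagonal_apply_eq] at he
        have h1D : (((⟨1, hn2⟩ : Fin n) : ℕ)) % D = 1 := Nat.mod_eq_of_lt hD2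
        rw [h1D] at he
        simp [Matrix.one_apply] at he
    · intro hD1 p hb hproj
      haveI : ConnectedSpace Circle :=
        Function.Surjective.connectedSpace
          (fun z => ⟨Complex.arg (z : ℂ), Circle.exp_arg z⟩) Circle.exp.continuous
      have key : ∀ z, (p z).trace = ((p z).rank : ℂ) :=
        fun z => trace_eq_rank_idem _ (hproj z).1
      have hg : Continuous fun z => (((p z).rank : ℝ)) := by
        have h1 : Continuous fun z => (p z).trace := p.continuous.matrix_trace
        have h2 : Continuous fun z => ((p z).trace).re := Complex.continuous_re.comp h1
        have h3 : (fun z => (((p z).rank : ℝ))) = fun z => ((p z).trace).re := by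
          funext z
          rw [key z]
          simp
        rw [h3]
        exact h2
      have hmono : ∀ z w : Circle, (p z).rank ≤ (p w).rank := by
        intro z w
        by_contra hlt
        push_neg at hlt
        have hmem : (((p w).rank : ℝ)) + 1/2 ∈
            Set.Icc (((p w).rank : ℝ)) (((p z).rank : ℝ)) := by
          constructor
          · linarith
          · have : ((p w).rank : ℝ) + 1 ≤ ((p z).rank : ℝ) := by exact_mod_cast hlt
            linarith
        obtain ⟨u, hu⟩ := intermediate_value_univ w z hg hmem
        have hu' : ((p u).rank : ℝ) = ((p w).rank : ℝ) + 1/2 := hu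
        rcases le_or_gt (p u).rank (p w).rank with hc | hc
        · have h9 : ((p u).rank : ℝ) ≤ ((p w).rank : ℝ) := by exact_mod_cast hc
          linarith
        · have h9 : ((p w).rank : ℝ) + 1 ≤ ((p u).rank : ℝ) := by exact_mod_cast hc
          linarith
      have hconst : ∀ z w : Circle, (p z).rank = (p w).rank :=
        fun z w => le_antisymm (hmono z w) (hmono w z)
      set r0 := (p 1).rank with hr0
      have hdvd_r : n ∣ r0 := by
        have := fwd p hb (fun z => (hproj z).1) r0 (fun i => hconst _ _)
        rwa [hD1, Nat.div_one] at this
      have hle : r0 ≤ n := le_trans (Matrix.rank_le_card_width _) (by simp)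
      rcases Nat.eq_zero_or_pos r0 with h0 | hpos
      · left
        apply ContinuousMap.ext
        intro z
        have hz : (p z).rank = 0 := (hconst z 1).trans h0
        show p z = (0 : C(Circle, Matrix (Fin n) (Fin n) ℂ)) z
        rw [ContinuousMap.zero_apply]
        exact eq_zero_of_rank_zero hz
      · have hrn : r0 = n := Nat.le_antisymm hle (Nat.le_of_dvd hpos hdvd_r)
        right
        apply ContinuousMap.ext
        intro z
        show p z = (1 : C(Circle, Matrix (Fin n) (Fin n) ℂ)) z
        rw [ContinuousMap.one_apply]
        exact eq_one_of_idem_rank_card (hproj z).1 ((hconst z 1).trans hrn)
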